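/- Let r ∈ (1/2, 2/3], φ(x) = exp(−x), and γ as in the counterexample (γ(x) = 1−(x−1)^2 for x<1, γ(x) = 2(x−1)^2+1 for x≥1). For k ≥ 2 let p = (r, 1−r, 0, ..., 0) ∈ Δ^k and let L be the Gamma-Phi loss. Define w^t = (0, 1/t, −t, ..., −t) ∈ R^k. Then lim_{t→∞} C_p(w^t) = C_p^*, while the argmax coordinate of w^t equals 2 for all t ≥ 1, even though p_2 = 1−r < r = max_j p_j. -/

import Mathlib

open Filter Topology

/-- The piecewise quadratic `γ` of the counterexample. -/
noncomputable def γc (x : ℝ) : ℝ := if x < 1 then 1 - (x - 1) ^ 2 else 2 * (x - 1) ^ 2 + 1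

/-- `φ(x) = exp(−x)`. -/
noncomputable def φc (x : ℝ) : ℝ := Real.exp (-x)

/-- The `y`-th component of the Gamma-Phi loss associated to `γ` and `φ`. -/
noncomputable def gammaPhiLoss {k : ℕ} (γ φ : ℝ → ℝ) (v : Fin k → ℝ) (y : Fin k) : ℝ :=
  γ (∑ j ∈ Finset.univ.erase y, φ (v y - v j))

/-- The conditional risk of the Gamma-Phi loss at `p`. -/
noncomputable def condRisk {k : ℕ} (γ φ : ℝ → ℝ) (p v : Fin k → ℝ) : ℝ :=
  ∑ y, p y * gammaPhiLoss γ φ v y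

lemma γc_eq : γc = fun x => 1 - (x - 1) ^ 2 + 3 * max (x - 1) 0 ^ 2 := by
  funext x
  unfold γc
  rcases lt_or_ge x 1 with h | h
  · rw [if_pos h, max_eq_right (by linarith)]; ring
  · rw [if_neg (not_lt.2 h), max_eq_left (by linarith)]; ring

lemma γc_cont : Continuous γc := by
  rw [γc_eq]; fun_prop

lemma γc_one : γc 1 = 1 := by norm_num [γc]

lemma γc_mono : Monotone γc := by
  intro a b hab
  unfold γc
  rcases lt_or_ge a 1 with ha | ha <;> rcases lt_or_ge b 1 with hb | hb
  · rw [if_pos ha, if_pos hb]; nlinarith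
  · rw [if_pos ha, if_neg (not_lt.2 hb)]; nlinarith
  · linarith
  · rw [if_neg (not_lt.2 ha), if_neg (not_lt.2 hb)]; nlinarith

lemma key_lb (r : ℝ) (hr1 : 1/2 < r) (hr2 : r ≤ 2/3) (a : ℝ) :
    1 ≤ r * γc (Real.exp (-a)) + (1 - r) * γc (Real.exp a) := by
  rcases lt_trichotomy a 0 with h | h | h
  · set u := Real.exp (-a) with hu
    set t := Real.exp a with ht
    have hu1 : 1 < u := Real.one_lt_exp_iff.2 (by linarith)
    have ht1 : t < 1 := by rw [ht, ← Real.exp_zero]; exact Real.exp_lt_exp.2 h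
    have ht0 : 0 < t := Real.exp_pos a
    have htu : t * u = 1 := by rw [ht, hu, ← Real.exp_add]; simp
    rw [γc, γc, if_neg (not_lt.2 hu1.le), if_pos ht1]
    nlinarith [sq_nonneg (u - 1), sq_nonneg (t - 1), sq_nonneg (u*t - 1),
      mul_pos ht0 (Real.exp_pos (-a)), sq_nonneg ((u-1)*(t-1))]
  · simp [h, γc_one]
  · set u := Real.exp a with hu
    set t := Real.exp (-a) with ht
    have hu1 : 1 < u := Real.one_lt_exp_iff.2 h
    have ht1 : t < 1 := by rw [ht, ← Real.exp_zero]; exact Real.exp_lt_exp.2 (by linarith)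
    have ht0 : 0 < t := Real.exp_pos _
    have htu : t * u = 1 := by rw [ht, hu, ← Real.exp_add]; simp
    rw [γc, γc, if_neg (not_lt.2 hu1.le), if_pos ht1]
    nlinarith [sq_nonneg (u - 1), sq_nonneg (t - 1), mul_pos ht0 ht0, sq_nonneg ((u-1)*(t-1))]

lemma sum_split {k : ℕ} (i0 i1 : Fin k) (h : i1 ≠ i0) (f : Fin k → ℝ) (B : ℝ)
    (hf : ∀ j, j ≠ i0 → j ≠ i1 → f j = B) :
    ∑ j ∈ Finset.univ.erase i0, f j = f i1 + ((k - 2 : ℕ) : ℝ) * B := by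
  have hmem : i1 ∈ Finset.univ.erase i0 := Finset.mem_erase.2 ⟨h, Finset.mem_univ _⟩
  rw [← Finset.insert_erase hmem, Finset.sum_insert (Finset.notMem_erase _ _)]
  congr 1
  rw [Finset.sum_congr rfl (fun j hj => hf j
      (Finset.mem_erase.1 (Finset.mem_of_mem_erase hj)).1
      (Finset.mem_erase.1 hj).1),
    Finset.sum_const, nsmul_eq_mul]
  congr 2
  rw [Finset.card_erase_of_mem hmem, Finset.card_erase_of_mem (Finset.mem_univ _),
    Finset.card_univ, Fintype.card_fin]
  omega

/-- For `p = (r, 1−r, 0, …, 0)` with `r ∈ (1/2, 2/3]` and the counterexample Gamma-Phi loss,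
the sequence `w^t = (0, 1/t, −t, …, −t)` attains the Bayes conditional risk in the limit,
while its argmax coordinate is always the second one, whose probability `1 − r` is not
maximal. -/
theorem counterexample_witness_sequence {k : ℕ} (hk : 2 ≤ k)
    (r : ℝ) (hr : r ∈ Set.Ioc (1/2 : ℝ) (2/3))
    (p : Fin k → ℝ)
    (hp : p = fun i => if i = (⟨0, by omega⟩ : Fin k) then r
      else if i = (⟨1, by omega⟩ : Fin k) then 1 - r else 0)
    (w : ℕ → Fin k → ℝ)
    (hw : w = fun (t : ℕ) (i : Fin k) => if i = (⟨0, by omega⟩ : Fin k) then 0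
      else if i = (⟨1, by omega⟩ : Fin k) then 1 / (t : ℝ) else -(t : ℝ)) :
    Tendsto (fun t => condRisk γc φc p (w t)) atTop
        (𝓝 (⨅ v : Fin k → ℝ, condRisk γc φc p v)) ∧
    (∀ t : ℕ, 1 ≤ t → ∀ j : Fin k, j ≠ (⟨1, by omega⟩ : Fin k) →
      w t j < w t (⟨1, by omega⟩ : Fin k)) ∧
    p (⟨1, by omega⟩ : Fin k) < p (⟨0, by omega⟩ : Fin k) := by
  obtain ⟨hr1, hr2⟩ := hr
  have h0k : 0 < k := by omega
  have h1k : 1 < k := by omega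
  set i0 : Fin k := ⟨0, h0k⟩ with hi0
  set i1 : Fin k := ⟨1, h1k⟩ with hi1
  have hne : i1 ≠ i0 := Fin.ne_of_val_ne (by norm_num)
  -- values of p and w
  have hp0 : p i0 = r := by rw [hp]; simp
  have hp1 : p i1 = 1 - r := by rw [hp]; simp [hne]
  have hw0 : ∀ t : ℕ, w t i0 = 0 := by intro t; rw [hw]; simp
  have hw1 : ∀ t : ℕ, w t i1 = 1 / (t : ℝ) := by intro t; rw [hw]; simp [hne]
  have hwj : ∀ (t : ℕ) (j : Fin k), j ≠ i0 → j ≠ i1 → w t j = -(t : ℝ) := by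
    intro t j h1 h2; rw [hw]; simp [h1, h2]
  -- conditional risk in terms of the two relevant labels
  have hC : ∀ v : Fin k → ℝ, condRisk γc φc p v =
      r * gammaPhiLoss γc φc v i0 + (1 - r) * gammaPhiLoss γc φc v i1 := by
    intro v
    unfold condRisk
    rw [← Finset.sum_subset (Finset.subset_univ ({i0, i1} : Finset (Fin k)))
      (fun y _ hy => ?_), Finset.sum_pair hne.symm, hp0, hp1]
    have hy' : y ≠ i0 ∧ y ≠ i1 := by simpa using hy
    rw [hp]; simp [hy'.1, hy'.2]
  -- uniform lower bound 1
  have lb : ∀ v : Fin k → ℝ, 1 ≤ condRisk γc φc p v := by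
    intro v
    rw [hC]
    set a : ℝ := v i0 - v i1 with ha
    have mem0 : i1 ∈ Finset.univ.erase i0 := Finset.mem_erase.2 ⟨hne, Finset.mem_univ _⟩
    have mem1 : i0 ∈ Finset.univ.erase i1 := Finset.mem_erase.2 ⟨hne.symm, Finset.mem_univ _⟩
    have e0 : Real.exp (-a) ≤ ∑ j ∈ Finset.univ.erase i0, φc (v i0 - v j) := by
      have := Finset.single_le_sum (f := fun j => φc (v i0 - v j))
        (fun j _ => (Real.exp_pos _).le) mem0
      simpa [φc, ha] using this
    have e1 : Real.exp a ≤ ∑ j ∈ Finset.univ.erase i1, φc (v i1 - v j) := by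
      have := Finset.single_le_sum (f := fun j => φc (v i1 - v j))
        (fun j _ => (Real.exp_pos _).le) mem1
      have harg : -(v i1 - v i0) = a := by rw [ha]; ring
      simpa [φc, harg] using this
    calc (1:ℝ) ≤ r * γc (Real.exp (-a)) + (1 - r) * γc (Real.exp a) := key_lb r hr1 hr2 a
      _ ≤ r * gammaPhiLoss γc φc v i0 + (1 - r) * gammaPhiLoss γc φc v i1 := by
        unfold gammaPhiLoss
        exact add_le_add (mul_le_mul_of_nonneg_left (γc_mono e0) (by linarith))
          (mul_le_mul_of_nonneg_left (γc_mono e1) (by linarith))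
  -- explicit value on the witness sequence
  have hval : ∀ t : ℕ, condRisk γc φc p (w t) =
      r * γc (Real.exp (1 / (t : ℝ)) + ((k - 2 : ℕ) : ℝ) * Real.exp (-(t : ℝ))) +
      (1 - r) * γc (Real.exp (-(1 / (t : ℝ))) +
        ((k - 2 : ℕ) : ℝ) * (Real.exp (-(1 / (t : ℝ))) * Real.exp (-(t : ℝ)))) := by
    intro t
    rw [hC]
    unfold gammaPhiLoss
    have h0 : ∑ j ∈ Finset.univ.erase i0, φc (w t i0 - w t j) =
        Real.exp (1 / (t : ℝ)) + ((k - 2 : ℕ) : ℝ) * Real.exp (-(t : ℝ)) := by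
      rw [sum_split i0 i1 hne _ (Real.exp (-(t : ℝ)))
        (fun j hj0 hj1 => by rw [hwj t j hj0 hj1, hw0, φc]; ring_nf)]
      rw [hw0, hw1, φc]
      ring_nf
    have h1 : ∑ j ∈ Finset.univ.erase i1, φc (w t i1 - w t j) =
        Real.exp (-(1 / (t : ℝ))) +
          ((k - 2 : ℕ) : ℝ) * (Real.exp (-(1 / (t : ℝ))) * Real.exp (-(t : ℝ))) := by
      rw [sum_split i1 i0 hne.symm _ (Real.exp (-(1 / (t : ℝ))) * Real.exp (-(t : ℝ)))
        (fun j hj1 hj0 => by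
          rw [hwj t j hj0 hj1, hw1, φc, ← Real.exp_add]; ring_nf)]
      rw [hw0, hw1, φc]
      ring_nf
    rw [h0, h1]
  -- the limit is 1
  have hinv : Tendsto (fun t : ℕ => 1 / (t : ℝ)) atTop (𝓝 0) :=
    tendsto_one_div_atTop_nhds_zero_nat
  have hexp1 : Tendsto (fun t : ℕ => Real.exp (1 / (t : ℝ))) atTop (𝓝 1) := by
    simpa [Function.comp_def] using (Real.continuous_exp.tendsto 0).comp hinv
  have hexpneg1 : Tendsto (fun t : ℕ => Real.exp (-(1 / (t : ℝ)))) atTop (𝓝 1) := by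
    have h' : Tendsto (fun t : ℕ => -(1 / (t : ℝ))) atTop (𝓝 0) := by simpa using hinv.neg
    simpa [Function.comp_def] using (Real.continuous_exp.tendsto 0).comp h'
  have hexpnegt : Tendsto (fun t : ℕ => Real.exp (-(t : ℝ))) atTop (𝓝 0) :=
    Real.tendsto_exp_neg_atTop_nhds_zero.comp tendsto_natCast_atTop_atTop
  have hA : Tendsto (fun t : ℕ =>
      Real.exp (1 / (t : ℝ)) + ((k - 2 : ℕ) : ℝ) * Real.exp (-(t : ℝ))) atTop (𝓝 1) := by
    simpa using hexp1.add (hexpnegt.const_mul ((k - 2 : ℕ) : ℝ))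
  have hB : Tendsto (fun t : ℕ => Real.exp (-(1 / (t : ℝ))) +
      ((k - 2 : ℕ) : ℝ) * (Real.exp (-(1 / (t : ℝ))) * Real.exp (-(t : ℝ)))) atTop (𝓝 1) := by
    simpa using hexpneg1.add (((hexpneg1.mul hexpnegt)).const_mul ((k - 2 : ℕ) : ℝ))
  have htendC : Tendsto (fun t : ℕ => condRisk γc φc p (w t)) atTop (𝓝 1) := by
    have h := (((γc_cont.tendsto 1).comp hA).const_mul r).add
      (((γc_cont.tendsto 1).comp hB).const_mul (1 - r))
    have h1 : r * γc 1 + (1 - r) * γc 1 = 1 := by rw [γc_one]; ring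
    rw [h1] at h
    exact h.congr fun t => (hval t).symm
  -- the infimum equals 1
  have hbdd : BddBelow (Set.range fun v : Fin k → ℝ => condRisk γc φc p v) :=
    ⟨1, by rintro x ⟨v, rfl⟩; exact lb v⟩
  have hinf : (⨅ v : Fin k → ℝ, condRisk γc φc p v) = 1 :=
    le_antisymm (ge_of_tendsto' htendC fun t => ciInf_le hbdd (w t)) (le_ciInf lb)
  refine ⟨hinf ▸ htendC, ?_, ?_⟩
  · intro t ht j hj
    have htR : (1 : ℝ) ≤ (t : ℝ) := by exact_mod_cast ht
    have hpos : 0 < 1 / (t : ℝ) := by positivity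
    have hwt1 : w t (⟨1, by omega⟩ : Fin k) = 1 / (t : ℝ) := hw1 t
    rw [hwt1]
    by_cases hj0 : j = i0
    · rw [hj0, hw0]; exact hpos
    · rw [hwj t j hj0 hj]; linarith
  · have : p i1 < p i0 := by rw [hp0, hp1]; linarith
    exact this
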